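/- Let γ, σ² : [0,1] → ℝ be continuous with σ²(u) > 0 for all u ∈ [0,1] (condition (UE)), let Γ(u) := ∫₀^u γ(v) dv, g := ∫₀¹ γ(v) dv, assume (E1): Γ(u) − g·u > 0 for all u ∈ (0,1), let Ψ(u) := ∫_{1/2}^u σ²(v)/(2(Γ(v) − g·v)) dv and p_c := 2(g − γ(1))/σ²(1), and suppose p_c > 0. Then for every p with 0 ≤ p < p_c, the integration-by-parts identity ∫₀¹ exp(p·Ψ(u))·(γ(u) − g) du = −(p/2)·∫₀¹ exp(p·Ψ(u))·σ²(u) du holds; consequently, with b(u) := γ(u) + σ²(u)/2, G^p := ⟨b, Π̄^p⟩, and G_*^p := (1/2)·⟨σ², Π̄^p⟩, one has the reduction formula G^p = (1−p)·G_*^p + g. -/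

import Mathlib

open MeasureTheory Set Filter Topology

/-- `Γ(u) = ∫₀^u γ(v) dv`. -/
noncomputable def Gam (γ : ℝ → ℝ) (u : ℝ) : ℝ := ∫ v in (0:ℝ)..u, γ v

/-- market mean growth rate `g = ∫₀¹ γ(v) dv`. -/
noncomputable def mg (γ : ℝ → ℝ) : ℝ := ∫ v in (0:ℝ)..1, γ v

/-- `Ψ(u) = ∫_{1/2}^u σ²(v) / (2 (Γ(v) - g v)) dv`. -/
noncomputable def Psi (γ σ2 : ℝ → ℝ) (u : ℝ) : ℝ :=
  ∫ v in (1/2:ℝ)..u, σ2 v / (2 * (Gam γ v - mg γ * v))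

/-- critical diversity index `p_c = 2 (g - γ(1)) / σ²(1)`. -/
noncomputable def pcrit (γ σ2 : ℝ → ℝ) : ℝ := 2 * (mg γ - γ 1) / σ2 1

/-- critical index `q_c = 2 (γ(0) - g) / σ²(0)`. -/
noncomputable def qcrit (γ σ2 : ℝ → ℝ) : ℝ := 2 * (γ 0 - mg γ) / σ2 0

/-- `⟨f, Π̄^p⟩ = (∫₀¹ f(u) exp(p Ψ(u)) du) / (∫₀¹ exp(p Ψ(u)) du)`. -/
noncomputable def bracket (γ σ2 f : ℝ → ℝ) (p : ℝ) : ℝ :=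
  (∫ u in Set.Ioo (0:ℝ) 1, f u * Real.exp (p * Psi γ σ2 u)) /
    ∫ u in Set.Ioo (0:ℝ) 1, Real.exp (p * Psi γ σ2 u)

section helpers
variable {γ σ2 : ℝ → ℝ}

lemma Fcont (hγc : ContinuousOn γ (Set.Icc 0 1)) :
    ContinuousOn (fun u => Gam γ u - mg γ * u) (Set.Icc 0 1) := by
  have h1 : ContinuousOn (Gam γ) (Set.Icc 0 1) := by
    have := intervalIntegral.continuousOn_primitive_interval
      (a := (0:ℝ)) (b := (1:ℝ)) (f := γ) (μ := volume) ?_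
    · exact (by simpa [Set.uIcc_of_le (zero_le_one)] using this :
        ContinuousOn (fun x => ∫ t in (0:ℝ)..x, γ t) (Set.Icc 0 1))
    · rw [Set.uIcc_of_le (zero_le_one : (0:ℝ) ≤ 1)]
      exact hγc.integrableOn_Icc
  exact h1.sub (continuousOn_const.mul continuousOn_id)

lemma Fderiv (hγc : ContinuousOn γ (Set.Icc 0 1)) {u : ℝ} (hu : u ∈ Set.Ioo (0:ℝ) 1) :
    HasDerivAt (fun v => Gam γ v - mg γ * v) (γ u - mg γ) u := by
  have hsub : Set.uIcc (0:ℝ) u ⊆ Set.Icc 0 1 := by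
    rw [Set.uIcc_of_le hu.1.le]
    exact Set.Icc_subset_Icc le_rfl hu.2.le
  have hint : IntervalIntegrable γ volume 0 u := (hγc.mono hsub).intervalIntegrable
  have hmem : Set.Icc (0:ℝ) 1 ∈ 𝓝 u := Icc_mem_nhds hu.1 hu.2
  have hca : ContinuousAt γ u := (hγc u ⟨hu.1.le, hu.2.le⟩).continuousAt hmem
  have hms : StronglyMeasurableAtFilter γ (𝓝 u) volume :=
    ContinuousOn.stronglyMeasurableAtFilter isOpen_Ioo (hγc.mono Set.Ioo_subset_Icc_self) u hu
  have h1 : HasDerivAt (Gam γ) (γ u) u :=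
    intervalIntegral.integral_hasDerivAt_right hint hms hca
  have h2 := h1.sub ((hasDerivAt_id' u).const_mul (mg γ))
  rw [mul_one] at h2
  exact h2

/-- condition (E1) denominator positivity gives continuity of the Ψ-integrand on (0,1). -/
lemma hcont (hγc : ContinuousOn γ (Set.Icc 0 1)) (hσc : ContinuousOn σ2 (Set.Icc 0 1))
    (hE1 : ∀ u ∈ Set.Ioo (0:ℝ) 1, 0 < Gam γ u - mg γ * u) :
    ContinuousOn (fun v => σ2 v / (2 * (Gam γ v - mg γ * v))) (Set.Ioo 0 1) := by
  apply (hσc.mono Set.Ioo_subset_Icc_self).div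
    (continuousOn_const.mul ((Fcont hγc).mono Set.Ioo_subset_Icc_self))
  intro x hx
  have := hE1 x hx
  exact (mul_pos two_pos this).ne'

lemma psi_deriv (hγc : ContinuousOn γ (Set.Icc 0 1)) (hσc : ContinuousOn σ2 (Set.Icc 0 1))
    (hE1 : ∀ u ∈ Set.Ioo (0:ℝ) 1, 0 < Gam γ u - mg γ * u)
    {u : ℝ} (hu : u ∈ Set.Ioo (0:ℝ) 1) :
    HasDerivAt (Psi γ σ2) (σ2 u / (2 * (Gam γ u - mg γ * u))) u := by
  have hhalf : (1/2 : ℝ) ∈ Set.Ioo (0:ℝ) 1 := by norm_num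
  have hsub : Set.uIcc (1/2:ℝ) u ⊆ Set.Ioo 0 1 :=
    Set.ordConnected_Ioo.uIcc_subset hhalf hu
  have hc := hcont hγc hσc hE1
  have hint : IntervalIntegrable (fun v => σ2 v / (2 * (Gam γ v - mg γ * v))) volume (1/2) u :=
    (hc.mono hsub).intervalIntegrable
  have hca : ContinuousAt (fun v => σ2 v / (2 * (Gam γ v - mg γ * v))) u :=
    hc.continuousAt (isOpen_Ioo.mem_nhds hu)
  have hms := ContinuousOn.stronglyMeasurableAtFilter (μ := volume) isOpen_Ioo hc u hu
  exact intervalIntegral.integral_hasDerivAt_right hint hms hca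

/-- `ψ v = ψ u + ∫_u^v h` for `u, v ∈ (0,1)`. -/
lemma psi_add (hγc : ContinuousOn γ (Set.Icc 0 1)) (hσc : ContinuousOn σ2 (Set.Icc 0 1))
    (hE1 : ∀ u ∈ Set.Ioo (0:ℝ) 1, 0 < Gam γ u - mg γ * u)
    {u v : ℝ} (hu : u ∈ Set.Ioo (0:ℝ) 1) (hv : v ∈ Set.Ioo (0:ℝ) 1) :
    Psi γ σ2 v = Psi γ σ2 u + ∫ t in u..v, σ2 t / (2 * (Gam γ t - mg γ * t)) := by
  have hhalf : (1/2 : ℝ) ∈ Set.Ioo (0:ℝ) 1 := by norm_num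
  have hc := hcont hγc hσc hE1
  have h1 : IntervalIntegrable (fun t => σ2 t / (2 * (Gam γ t - mg γ * t))) volume (1/2) u :=
    ((hc.mono (Set.ordConnected_Ioo.uIcc_subset hhalf hu))).intervalIntegrable
  have h2 : IntervalIntegrable (fun t => σ2 t / (2 * (Gam γ t - mg γ * t))) volume u v :=
    ((hc.mono (Set.ordConnected_Ioo.uIcc_subset hu hv))).intervalIntegrable
  rw [Psi, Psi, intervalIntegral.integral_add_adjacent_intervals h1 h2]

/-- `ψ` is monotone on `(0,1)`. -/
lemma psi_mono (hγc : ContinuousOn γ (Set.Icc 0 1)) (hσc : ContinuousOn σ2 (Set.Icc 0 1))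
    (hUE : ∀ u ∈ Set.Icc (0:ℝ) 1, 0 < σ2 u)
    (hE1 : ∀ u ∈ Set.Ioo (0:ℝ) 1, 0 < Gam γ u - mg γ * u)
    {u v : ℝ} (hu : u ∈ Set.Ioo (0:ℝ) 1) (hv : v ∈ Set.Ioo (0:ℝ) 1) (huv : u ≤ v) :
    Psi γ σ2 u ≤ Psi γ σ2 v := by
  rw [psi_add hγc hσc hE1 hu hv]
  have : 0 ≤ ∫ t in u..v, σ2 t / (2 * (Gam γ t - mg γ * t)) := by
    apply intervalIntegral.integral_nonneg huv
    intro x hx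
    have hxI : x ∈ Set.Ioo (0:ℝ) 1 := ⟨lt_of_lt_of_le hu.1 hx.1, lt_of_le_of_lt hx.2 hv.2⟩
    have h1 := hUE x (Set.Ioo_subset_Icc_self hxI)
    have h2 := hE1 x hxI
    positivity
  linarith

end helpers

section helpers2
variable {γ σ2 : ℝ → ℝ}

/-- `F v = ∫_v^1 (g - γ t) dt`. -/
lemma F_eq (hγc : ContinuousOn γ (Set.Icc 0 1)) {v : ℝ} (hv : v ∈ Set.Icc (0:ℝ) 1) :
    Gam γ v - mg γ * v = ∫ t in v..1, (mg γ - γ t) := by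
  have h1 : IntervalIntegrable γ volume 0 v := by
    apply ContinuousOn.intervalIntegrable
    apply hγc.mono
    rw [Set.uIcc_of_le hv.1]
    exact Set.Icc_subset_Icc le_rfl hv.2
  have h2 : IntervalIntegrable γ volume v 1 := by
    apply ContinuousOn.intervalIntegrable
    apply hγc.mono
    rw [Set.uIcc_of_le hv.2]
    exact Set.Icc_subset_Icc hv.1 le_rfl
  have hadd : Gam γ v + ∫ t in v..1, γ t = mg γ :=
    intervalIntegral.integral_add_adjacent_intervals h1 h2
  have hconst : IntervalIntegrable (fun _ : ℝ => mg γ) volume v 1 :=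
    intervalIntegrable_const
  rw [intervalIntegral.integral_sub hconst h2, intervalIntegral.integral_const]
  have : (1 - v) • mg γ = mg γ - v * mg γ := by ring_nf
  rw [this]
  linarith

/-- the key local estimate near `u = 1`. -/
lemma near_one (hγc : ContinuousOn γ (Set.Icc 0 1)) (hσc : ContinuousOn σ2 (Set.Icc 0 1))
    (hUE : ∀ u ∈ Set.Icc (0:ℝ) 1, 0 < σ2 u)
    (hE1 : ∀ u ∈ Set.Ioo (0:ℝ) 1, 0 < Gam γ u - mg γ * u)
    {p' : ℝ} (hp'pos : 0 < p') (hp'lt : p' < pcrit γ σ2) :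
    ∃ δ : ℝ, 0 < δ ∧ δ < 1/2 ∧ ∀ v ∈ Set.Ico (1-δ) 1,
      σ2 v / (2 * (Gam γ v - mg γ * v)) ≤ 1 / p' * (1 - v)⁻¹ := by
  have hσ1 : 0 < σ2 1 := hUE 1 (by norm_num)
  have hpc' : 0 < 2 * (mg γ - γ 1) / σ2 1 := by
    have := lt_trans hp'pos hp'lt
    rwa [pcrit] at this
  have hr : 0 < mg γ - γ 1 := by
    rcases div_pos_iff.mp hpc' with ⟨h, _⟩ | ⟨_, h⟩
    · linarith
    · linarith
  set r := mg γ - γ 1 with hrdef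
  have hps : p' * σ2 1 < 2 * r := by
    have h := hp'lt
    rw [pcrit, lt_div_iff₀ hσ1] at h
    linarith
  set ε : ℝ := (2 * r - p' * σ2 1) / (2 * p' + 2) with hεdef
  have hεpos : 0 < ε := by
    apply div_pos (by linarith) (by linarith)
  have hεr : ε < r := by
    rw [hεdef, div_lt_iff₀ (by linarith)]
    nlinarith [hp'pos, hσ1]
  have hkey : p' * (σ2 1 + ε) ≤ 2 * (r - ε) := by
    have : (2 * p' + 2) * ε = 2 * r - p' * σ2 1 := by
      rw [hεdef]; field_simp
    nlinarith [hεpos, hp'pos]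
  -- continuity at 1
  have hγ1 : ContinuousWithinAt γ (Set.Icc 0 1) 1 := hγc 1 (by norm_num)
  have hσ1c : ContinuousWithinAt σ2 (Set.Icc 0 1) 1 := hσc 1 (by norm_num)
  rw [Metric.continuousWithinAt_iff] at hγ1 hσ1c
  obtain ⟨δ1, hδ1, h1⟩ := hγ1 ε hεpos
  obtain ⟨δ2, hδ2, h2⟩ := hσ1c ε hεpos
  set δ : ℝ := min (min δ1 δ2) (1/2) / 2 with hδdef
  have hδpos : 0 < δ := by positivity
  have hδhalf : δ < 1/2 := by
    have : δ ≤ (1/2)/2 := by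
      apply div_le_div_of_nonneg_right ?_ (by norm_num)
      · exact min_le_right _ _
    linarith
  refine ⟨δ, hδpos, hδhalf, ?_⟩
  intro v hv
  have hvI : v ∈ Set.Ioo (0:ℝ) 1 := ⟨by linarith [hv.1, hδhalf], hv.2⟩
  have hbnd : ∀ t ∈ Set.Icc v 1, |γ t - γ 1| < ε ∧ |σ2 t - σ2 1| < ε := by
    intro t ht
    have htI : t ∈ Set.Icc (0:ℝ) 1 := ⟨by linarith [ht.1, hvI.1.le], ht.2⟩
    have hdist : dist t 1 < min δ1 δ2 := by
      have hminpos : 0 < min δ1 δ2 := lt_min hδ1 hδ2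
      have hδle : δ ≤ min δ1 δ2 / 2 := by
        rw [hδdef]
        apply div_le_div_of_nonneg_right ?_ (by norm_num)
        exact le_trans (min_le_left _ _) le_rfl
      rw [Real.dist_eq, abs_sub_lt_iff]
      constructor
      · linarith [ht.2]
      · linarith [ht.1, hv.1]
    exact ⟨by simpa [Real.dist_eq] using h1 htI (lt_of_lt_of_le hdist (min_le_left _ _)),
           by simpa [Real.dist_eq] using h2 htI (lt_of_lt_of_le hdist (min_le_right _ _))⟩
  -- lower bound for F v
  have hFrep := F_eq hγc (Set.Ioo_subset_Icc_self hvI)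
  have hFlb : (r - ε) * (1 - v) ≤ Gam γ v - mg γ * v := by
    rw [hFrep]
    have hγint : IntervalIntegrable (fun t => mg γ - γ t) volume v 1 := by
      apply ContinuousOn.intervalIntegrable
      apply (continuousOn_const.sub hγc).mono
      rw [Set.uIcc_of_le hvI.2.le]
      exact Set.Icc_subset_Icc hvI.1.le le_rfl
    have := intervalIntegral.integral_mono_on hvI.2.le
      (intervalIntegrable_const (c := r - ε)) hγint
      (fun t ht => by
        have h := (hbnd t ht).1
        rw [abs_sub_lt_iff] at h
        show r - ε ≤ mg γ - γ t
        linarith [h.1])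
    rw [intervalIntegral.integral_const] at this
    calc (r - ε) * (1 - v) = (1 - v) • (r - ε) := by rw [smul_eq_mul]; ring
    _ ≤ _ := this
  have hσub : σ2 v ≤ σ2 1 + ε := by
    have := (hbnd v ⟨le_refl v, hvI.2.le⟩).2
    rw [abs_sub_lt_iff] at this
    linarith [this.1]
  have hFpos : 0 < Gam γ v - mg γ * v := hE1 v hvI
  have h1v : 0 < 1 - v := by linarith [hv.2]
  have hσvpos : 0 < σ2 v := hUE v (Set.Ioo_subset_Icc_self hvI)
  have h2F : (0:ℝ) < 2 * (Gam γ v - mg γ * v) := by linarith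
  have hpp : (0:ℝ) < p' * (1 - v) := by positivity
  have hrw : 1 / p' * (1 - v)⁻¹ = 1 / (p' * (1 - v)) := by
    field_simp
  rw [hrw, div_le_div_iff₀ h2F hpp]
  have e1 : p' * (σ2 1 + ε) * (1 - v) ≤ 2 * (r - ε) * (1 - v) :=
    mul_le_mul_of_nonneg_right hkey h1v.le
  have e2 : σ2 v * p' ≤ (σ2 1 + ε) * p' := mul_le_mul_of_nonneg_right hσub hp'pos.le
  have e3 : σ2 v * p' * (1 - v) ≤ (σ2 1 + ε) * p' * (1 - v) :=
    mul_le_mul_of_nonneg_right e2 h1v.le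
  nlinarith [hFlb, e1, e3]

end helpers2

section helpers3
variable {γ σ2 : ℝ → ℝ}

lemma global_bound (hγc : ContinuousOn γ (Set.Icc 0 1)) (hσc : ContinuousOn σ2 (Set.Icc 0 1))
    (hUE : ∀ u ∈ Set.Icc (0:ℝ) 1, 0 < σ2 u)
    (hE1 : ∀ u ∈ Set.Ioo (0:ℝ) 1, 0 < Gam γ u - mg γ * u)
    (hpc : 0 < pcrit γ σ2) {p : ℝ} (hp0 : 0 ≤ p) (hp : p < pcrit γ σ2) :
    ∃ C θ : ℝ, 0 < C ∧ 0 ≤ θ ∧ θ < 1 ∧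
      ∀ u ∈ Set.Ioo (0:ℝ) 1, Real.exp (p * Psi γ σ2 u) ≤ C * (1 - u) ^ (-θ) := by
  set p' : ℝ := (p + pcrit γ σ2) / 2 with hp'def
  have hp'pos : 0 < p' := by rw [hp'def]; linarith
  have hpp' : p < p' := by rw [hp'def]; linarith
  have hp'lt : p' < pcrit γ σ2 := by rw [hp'def]; linarith
  obtain ⟨δ, hδ0, hδh, hδ⟩ := near_one hγc hσc hUE hE1 hp'pos hp'lt
  set θ : ℝ := p / p' with hθdef
  have hθ0 : 0 ≤ θ := div_nonneg hp0 hp'pos.le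
  have hθ1 : θ < 1 := (div_lt_one hp'pos).mpr hpp'
  have h1δ : (1 - δ) ∈ Set.Ioo (0:ℝ) 1 := ⟨by linarith, by linarith⟩
  set K1 : ℝ := Real.exp (p * Psi γ σ2 (1 - δ)) with hK1def
  have hK1pos : 0 < K1 := Real.exp_pos _
  have hc := hcont hγc hσc hE1
  -- near-1 bound
  have hB : ∀ u ∈ Set.Ico (1 - δ) 1,
      Real.exp (p * Psi γ σ2 u) ≤ K1 * δ ^ θ * (1 - u) ^ (-θ) := by
    intro u hu
    have huI : u ∈ Set.Ioo (0:ℝ) 1 := ⟨by linarith [hu.1], hu.2⟩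
    have h1u : 0 < 1 - u := by linarith [hu.2]
    have hrep := psi_add hγc hσc hE1 h1δ huI
    have hintb : IntervalIntegrable (fun t => 1 / p' * (1 - t)⁻¹) volume (1 - δ) u := by
      apply ContinuousOn.intervalIntegrable
      apply ContinuousOn.mul continuousOn_const
      apply ContinuousOn.inv₀ (continuousOn_const.sub continuousOn_id)
      intro x hx
      rw [Set.uIcc_of_le hu.1] at hx
      have : x ≤ u := hx.2
      intro hcontra
      simp only [Pi.sub_apply, id] at hcontra
      nlinarith [hx.2, h1u]
    have hinth : IntervalIntegrable (fun t => σ2 t / (2 * (Gam γ t - mg γ * t))) volume (1-δ) u :=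
      (hc.mono (Set.ordConnected_Ioo.uIcc_subset h1δ huI)).intervalIntegrable
    have hmono := intervalIntegral.integral_mono_on hu.1 hinth hintb
      (fun t ht => hδ t ⟨ht.1, lt_of_le_of_lt ht.2 hu.2⟩)
    have hcomp : ∫ t in (1-δ)..u, 1 / p' * (1 - t)⁻¹
        = 1 / p' * (Real.log δ - Real.log (1 - u)) := by
      rw [intervalIntegral.integral_const_mul]
      have h1 : ∫ t in (1-δ)..u, (1 - t)⁻¹ = ∫ x in (1-u)..(1-(1-δ)), x⁻¹ :=
        intervalIntegral.integral_comp_sub_left (fun x => x⁻¹) 1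
      have h2 : (1 - (1 - δ)) = δ := by ring
      rw [h1, h2, integral_inv (Set.notMem_uIcc_of_lt h1u hδ0)]
      rw [Real.log_div (ne_of_gt hδ0) (ne_of_gt h1u)]
    have hψle : Psi γ σ2 u ≤ Psi γ σ2 (1 - δ) + 1 / p' * (Real.log δ - Real.log (1 - u)) := by
      rw [hrep]; rw [hcomp] at hmono; linarith
    have hple : p * Psi γ σ2 u
        ≤ p * Psi γ σ2 (1 - δ) + (θ * Real.log δ + (-θ) * Real.log (1 - u)) := by
      have h0 := mul_le_mul_of_nonneg_left hψle hp0
      have hrw : p * (1 / p') = θ := by rw [hθdef]; field_simp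
      have h2 : p * (Psi γ σ2 (1 - δ) + 1 / p' * (Real.log δ - Real.log (1 - u)))
          = p * Psi γ σ2 (1 - δ) + (θ * Real.log δ + (-θ) * Real.log (1 - u)) := by
        rw [← hrw]; ring
      linarith [h0, h2]
    calc Real.exp (p * Psi γ σ2 u)
        ≤ Real.exp (p * Psi γ σ2 (1-δ) + (θ * Real.log δ + (-θ) * Real.log (1-u))) :=
          Real.exp_le_exp.mpr hple
      _ = K1 * Real.exp (θ * Real.log δ) * Real.exp ((-θ) * Real.log (1-u)) := by
          rw [Real.exp_add, Real.exp_add, hK1def]; ring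
      _ = K1 * δ ^ θ * (1 - u) ^ (-θ) := by
          rw [Real.rpow_def_of_pos hδ0, Real.rpow_def_of_pos h1u, mul_comm (Real.log δ),
            mul_comm (Real.log (1-u))]
  refine ⟨max K1 (K1 * δ ^ θ), θ, lt_max_of_lt_left hK1pos, hθ0, hθ1, ?_⟩
  intro u hu
  have h1u : 0 < 1 - u := by linarith [hu.2]
  have hpow_pos : (0:ℝ) < (1 - u) ^ (-θ) := Real.rpow_pos_of_pos h1u _
  rcases le_or_gt u (1 - δ) with hle | hgt
  · have hψ := psi_mono hγc hσc hUE hE1 hu h1δ hle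
    have h1 : Real.exp (p * Psi γ σ2 u) ≤ K1 :=
      Real.exp_le_exp.mpr (mul_le_mul_of_nonneg_left hψ hp0)
    have h2 : (1:ℝ) ≤ (1 - u) ^ (-θ) := by
      rw [Real.rpow_neg h1u.le]
      rw [one_le_inv_iff₀]
      exact ⟨Real.rpow_pos_of_pos h1u _, Real.rpow_le_one h1u.le (by linarith [hu.1]) hθ0⟩
    calc Real.exp (p * Psi γ σ2 u) ≤ K1 * 1 := by linarith
      _ ≤ max K1 (K1 * δ ^ θ) * (1 - u) ^ (-θ) := by
          apply mul_le_mul (le_max_left _ _) h2 zero_le_one (le_of_lt (lt_max_of_lt_left hK1pos))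
  · have := hB u ⟨hgt.le, hu.2⟩
    calc Real.exp (p * Psi γ σ2 u) ≤ K1 * δ ^ θ * (1 - u) ^ (-θ) := this
      _ ≤ max K1 (K1 * δ ^ θ) * (1 - u) ^ (-θ) :=
          mul_le_mul_of_nonneg_right (le_max_right _ _) hpow_pos.le

end helpers3

section helpers4
variable {γ σ2 : ℝ → ℝ}

lemma psi_cont (hγc : ContinuousOn γ (Set.Icc 0 1)) (hσc : ContinuousOn σ2 (Set.Icc 0 1))
    (hE1 : ∀ u ∈ Set.Ioo (0:ℝ) 1, 0 < Gam γ u - mg γ * u) :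
    ContinuousOn (Psi γ σ2) (Set.Ioo 0 1) :=
  fun u hu => ((psi_deriv hγc hσc hE1 hu).continuousAt).continuousWithinAt

lemma rpow_integrable {θ : ℝ} (hθ1 : θ < 1) :
    IntegrableOn (fun u : ℝ => (1 - u) ^ (-θ)) (Set.Ioo (0:ℝ) 1) := by
  have h1 : IntervalIntegrable (fun x : ℝ => x ^ (-θ)) volume 0 1 :=
    intervalIntegral.intervalIntegrable_rpow' (by linarith)
  have h2 := h1.comp_sub_left 1
  simp only [sub_zero, sub_self] at h2
  have h3 : IntervalIntegrable (fun x : ℝ => (1 - x) ^ (-θ)) volume 0 1 := h2.symm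
  rwa [intervalIntegrable_iff_integrableOn_Ioo_of_le zero_le_one] at h3

lemma integrable_mul (hγc : ContinuousOn γ (Set.Icc 0 1)) (hσc : ContinuousOn σ2 (Set.Icc 0 1))
    (hUE : ∀ u ∈ Set.Icc (0:ℝ) 1, 0 < σ2 u)
    (hE1 : ∀ u ∈ Set.Ioo (0:ℝ) 1, 0 < Gam γ u - mg γ * u)
    (hpc : 0 < pcrit γ σ2) {p : ℝ} (hp0 : 0 ≤ p) (hp : p < pcrit γ σ2)
    {f : ℝ → ℝ} (hf : ContinuousOn f (Set.Icc 0 1)) :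
    IntegrableOn (fun u => Real.exp (p * Psi γ σ2 u) * f u) (Set.Ioo (0:ℝ) 1) := by
  obtain ⟨C, θ, hC, hθ0, hθ1, hb⟩ := global_bound hγc hσc hUE hE1 hpc hp0 hp
  obtain ⟨B, hB⟩ := isCompact_Icc.exists_bound_of_continuousOn hf
  have hBnn : 0 ≤ B := le_trans (norm_nonneg _) (hB 0 (by norm_num))
  have hmeas : AEStronglyMeasurable (fun u => Real.exp (p * Psi γ σ2 u) * f u)
      (volume.restrict (Set.Ioo (0:ℝ) 1)) := by
    apply ContinuousOn.aestronglyMeasurable ?_ measurableSet_Ioo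
    exact ((Real.continuous_exp.comp_continuousOn
      (continuousOn_const.mul (psi_cont hγc hσc hE1))).mul (hf.mono Set.Ioo_subset_Icc_self))
  have hdom : IntegrableOn (fun u : ℝ => C * B * (1 - u) ^ (-θ)) (Set.Ioo (0:ℝ) 1) :=
    (rpow_integrable hθ1).const_mul _
  apply hdom.mono' hmeas
  rw [ae_restrict_iff' measurableSet_Ioo]
  apply ae_of_all
  intro u hu
  have h1 := hb u hu
  have h2 := hB u (Set.Ioo_subset_Icc_self hu)
  have hexp : 0 < Real.exp (p * Psi γ σ2 u) := Real.exp_pos _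
  have hpow : 0 < (1 - u) ^ (-θ) := Real.rpow_pos_of_pos (by linarith [hu.2]) _
  calc ‖Real.exp (p * Psi γ σ2 u) * f u‖ = Real.exp (p * Psi γ σ2 u) * ‖f u‖ := by
        rw [norm_mul, Real.norm_eq_abs, abs_of_pos hexp]
    _ ≤ (C * (1 - u) ^ (-θ)) * B := by
        apply mul_le_mul h1 h2 (norm_nonneg _) (by positivity)
    _ = C * B * (1 - u) ^ (-θ) := by ring

lemma integrable_E (hγc : ContinuousOn γ (Set.Icc 0 1)) (hσc : ContinuousOn σ2 (Set.Icc 0 1))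
    (hUE : ∀ u ∈ Set.Icc (0:ℝ) 1, 0 < σ2 u)
    (hE1 : ∀ u ∈ Set.Ioo (0:ℝ) 1, 0 < Gam γ u - mg γ * u)
    (hpc : 0 < pcrit γ σ2) {p : ℝ} (hp0 : 0 ≤ p) (hp : p < pcrit γ σ2) :
    IntegrableOn (fun u => Real.exp (p * Psi γ σ2 u)) (Set.Ioo (0:ℝ) 1) := by
  have := integrable_mul hγc hσc hUE hE1 hpc hp0 hp (f := fun _ => (1:ℝ)) continuousOn_const
  simpa using this

end helpers4

section helpers5
variable {γ σ2 : ℝ → ℝ}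

lemma prod_deriv (hγc : ContinuousOn γ (Set.Icc 0 1)) (hσc : ContinuousOn σ2 (Set.Icc 0 1))
    (hE1 : ∀ u ∈ Set.Ioo (0:ℝ) 1, 0 < Gam γ u - mg γ * u) {p : ℝ}
    {u : ℝ} (hu : u ∈ Set.Ioo (0:ℝ) 1) :
    HasDerivAt (fun v => Real.exp (p * Psi γ σ2 v) * (Gam γ v - mg γ * v))
      (Real.exp (p * Psi γ σ2 u) * (γ u - mg γ + p * σ2 u / 2)) u := by
  have hψ := psi_deriv hγc hσc hE1 hu
  have hF := Fderiv hγc hu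
  have h1 : HasDerivAt (fun v => Real.exp (p * Psi γ σ2 v))
      (Real.exp (p * Psi γ σ2 u) * (p * (σ2 u / (2 * (Gam γ u - mg γ * u))))) u :=
    (hψ.const_mul p).exp
  have h2 := h1.mul hF
  refine h2.congr_deriv ?_
  have hFpos := hE1 u hu
  have hFne := hFpos.ne'
  have key : σ2 u / (2 * (Gam γ u - mg γ * u)) * (Gam γ u - mg γ * u) = σ2 u / 2 := by
    rw [div_mul_eq_mul_div, mul_div_mul_right _ _ hFne]
  linear_combination (Real.exp (p * Psi γ σ2 u) * p) * key

lemma key_zero (hγc : ContinuousOn γ (Set.Icc 0 1)) (hσc : ContinuousOn σ2 (Set.Icc 0 1))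
    (hUE : ∀ u ∈ Set.Icc (0:ℝ) 1, 0 < σ2 u)
    (hE1 : ∀ u ∈ Set.Ioo (0:ℝ) 1, 0 < Gam γ u - mg γ * u)
    (hpc : 0 < pcrit γ σ2) {p : ℝ} (hp0 : 0 ≤ p) (hp : p < pcrit γ σ2) :
    ∫ u in Set.Ioo (0:ℝ) 1, Real.exp (p * Psi γ σ2 u) * (γ u - mg γ + p * σ2 u / 2) = 0 := by
  set φ : ℝ → ℝ := fun u => Real.exp (p * Psi γ σ2 u) * (γ u - mg γ + p * σ2 u / 2) with hφdef
  have hfc : ContinuousOn (fun u => γ u - mg γ + p * σ2 u / 2) (Set.Icc 0 1) :=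
    (hγc.sub continuousOn_const).add ((continuousOn_const.mul hσc).div_const 2)
  have hφint : IntegrableOn φ (Set.Ioo (0:ℝ) 1) :=
    integrable_mul hγc hσc hUE hE1 hpc hp0 hp hfc
  -- the exhausting sequence
  set a : ℕ → ℝ := fun n => 1 / (n + 3) with hadef
  set b : ℕ → ℝ := fun n => 1 - 1 / (n + 3) with hbdef
  have hapos : ∀ n, 0 < a n := fun n => by positivity
  have hahalf : ∀ n, a n ≤ 1/2 := fun n => by
    have : (0:ℝ) ≤ (n:ℝ) := Nat.cast_nonneg n
    exact one_div_le_one_div_of_le (by norm_num) (by linarith)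
  have haI : ∀ n, a n ∈ Set.Ioo (0:ℝ) 1 := fun n => ⟨hapos n, by linarith [hahalf n]⟩
  have hbI : ∀ n, b n ∈ Set.Ioo (0:ℝ) 1 := fun n =>
    ⟨by simp only [hbdef]; linarith [hahalf n], by simp only [hbdef]; linarith [hapos n]⟩
  have hab : ∀ n, a n ≤ b n := fun n => by
    simp only [hbdef]; linarith [hahalf n]
  have ha0 : Tendsto a atTop (𝓝 0) := by
    rw [hadef]
    apply Tendsto.comp tendsto_inv_atTop_zero ?_ |>.congr (fun n => by rw [Function.comp, one_div])
    exact tendsto_atTop_add_const_right atTop 3 tendsto_natCast_atTop_atTop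
  have hb1 : Tendsto b atTop (𝓝 1) := by
    have : Tendsto (fun n : ℕ => 1 - a n) atTop (𝓝 (1 - 0)) := tendsto_const_nhds.sub ha0
    simpa using this
  -- interval FTC on [a n, b n]
  have hFTC : ∀ n, ∫ u in Set.Ioo (a n) (b n), φ u =
      Real.exp (p * Psi γ σ2 (b n)) * (Gam γ (b n) - mg γ * (b n))
        - Real.exp (p * Psi γ σ2 (a n)) * (Gam γ (a n) - mg γ * (a n)) := by
    intro n
    have hsub : Set.uIcc (a n) (b n) ⊆ Set.Ioo 0 1 :=
      Set.ordConnected_Ioo.uIcc_subset (haI n) (hbI n)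
    have hiint : IntervalIntegrable φ volume (a n) (b n) := by
      rw [intervalIntegrable_iff, Set.uIoc_of_le (hab n)]
      exact hφint.mono_set (fun x hx =>
        ⟨lt_trans (hapos n) hx.1, lt_of_le_of_lt hx.2 (hbI n).2⟩)
    have := intervalIntegral.integral_eq_sub_of_hasDerivAt
      (f := fun v => Real.exp (p * Psi γ σ2 v) * (Gam γ v - mg γ * v)) (f' := φ)
      (fun x hx => prod_deriv hγc hσc hE1 (hsub hx)) hiint
    rw [← this, intervalIntegral.integral_of_le (hab n), integral_Ioc_eq_integral_Ioo]
  -- monotone convergence of set integrals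
  have hmono : Monotone (fun n => Set.Ioo (a n) (b n)) := by
    intro m n hmn
    apply Set.Ioo_subset_Ioo
    · have h := (Nat.cast_le (α := ℝ)).mpr hmn
      have h13 : ((m:ℝ) + 3) ≤ (n:ℝ) + 3 := by linarith
      exact one_div_le_one_div_of_le (by positivity) h13
    · simp only [hbdef]
      have h := (Nat.cast_le (α := ℝ)).mpr hmn
      have h13 : ((m:ℝ) + 3) ≤ (n:ℝ) + 3 := by linarith
      have : (1:ℝ) / (n + 3) ≤ 1 / (m + 3) :=
        one_div_le_one_div_of_le (by positivity) h13
      linarith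
  have hunion : (⋃ n, Set.Ioo (a n) (b n)) = Set.Ioo (0:ℝ) 1 := by
    apply Set.Subset.antisymm
    · exact Set.iUnion_subset (fun n => Set.Ioo_subset_Ioo (hapos n).le (by
        simp only [hbdef]; linarith [hapos n]))
    · intro x hx
      have hmin : 0 < min x (1 - x) := lt_min hx.1 (by linarith [hx.2])
      obtain ⟨n, hn⟩ := exists_nat_one_div_lt hmin
      refine Set.mem_iUnion.mpr ⟨n, ?_, ?_⟩
      · calc a n = 1 / (n + 3) := rfl
          _ ≤ 1 / (n + 1) := one_div_le_one_div_of_le (by positivity) (by linarith)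
          _ < min x (1 - x) := hn
          _ ≤ x := min_le_left _ _
      · have : 1 / ((n:ℝ) + 3) < 1 - x := by
          calc (1:ℝ) / (n + 3) ≤ 1 / (n + 1) :=
              one_div_le_one_div_of_le (by positivity) (by linarith)
            _ < min x (1 - x) := hn
            _ ≤ 1 - x := min_le_right _ _
        simp only [hbdef]
        linarith
  have htend : Tendsto (fun n => ∫ u in Set.Ioo (a n) (b n), φ u) atTop
      (𝓝 (∫ u in Set.Ioo (0:ℝ) 1, φ u)) := by
    have := tendsto_setIntegral_of_monotone (μ := volume) (f := φ)
      (s := fun n => Set.Ioo (a n) (b n)) (fun n => measurableSet_Ioo) hmono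
      (by rw [hunion]; exact hφint)
    rwa [hunion] at this
  -- boundary terms tend to 0
  have hψhalf : Psi γ σ2 (1/2) = 0 := intervalIntegral.integral_same
  have hFcont := Fcont (γ := γ) hγc
  have hF0 : Gam γ 0 - mg γ * 0 = 0 := by
    simp [Gam, intervalIntegral.integral_same]
  have hG1 : Tendsto (fun n => Real.exp (p * Psi γ σ2 (a n)) * (Gam γ (a n) - mg γ * (a n)))
      atTop (𝓝 0) := by
    apply squeeze_zero_norm' (a := fun n => ‖Gam γ (a n) - mg γ * (a n)‖)
    · apply Eventually.of_forall
      intro n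
      have hψa : Psi γ σ2 (a n) ≤ 0 := by
        have := psi_mono hγc hσc hUE hE1 (haI n) (by norm_num : (1/2:ℝ) ∈ Set.Ioo (0:ℝ) 1)
          (hahalf n)
        rw [hψhalf] at this
        exact this
      have hexple : Real.exp (p * Psi γ σ2 (a n)) ≤ 1 := by
        apply Real.exp_le_one_iff.mpr
        exact mul_nonpos_of_nonneg_of_nonpos hp0 hψa
      rw [norm_mul]
      calc ‖Real.exp (p * Psi γ σ2 (a n))‖ * ‖Gam γ (a n) - mg γ * (a n)‖
          ≤ 1 * ‖Gam γ (a n) - mg γ * (a n)‖ := by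
            apply mul_le_mul_of_nonneg_right ?_ (norm_nonneg _)
            rw [Real.norm_eq_abs, abs_of_pos (Real.exp_pos _)]
            exact hexple
        _ = ‖Gam γ (a n) - mg γ * (a n)‖ := one_mul _
    · have hFa : Tendsto (fun n => Gam γ (a n) - mg γ * (a n)) atTop (𝓝 0) := by
        have hcw : ContinuousWithinAt (fun u => Gam γ u - mg γ * u) (Set.Icc 0 1) 0 :=
          hFcont 0 ⟨le_rfl, zero_le_one⟩
        have : Tendsto a atTop (𝓝[Set.Icc (0:ℝ) 1] 0) := by
          apply tendsto_nhdsWithin_of_tendsto_nhds_of_eventually_within _ ha0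
          exact Eventually.of_forall (fun n => Set.Ioo_subset_Icc_self (haI n))
        have := hcw.tendsto.comp this
        rwa [hF0] at this
      simpa using hFa.norm
  obtain ⟨C, θ, hC, hθ0, hθ1, hbd⟩ := global_bound hγc hσc hUE hE1 hpc hp0 hp
  obtain ⟨Bg, hBg⟩ := isCompact_Icc.exists_bound_of_continuousOn
    (continuousOn_const.sub hγc : ContinuousOn (fun t => mg γ - γ t) (Set.Icc 0 1))
  have hG2 : Tendsto (fun n => Real.exp (p * Psi γ σ2 (b n)) * (Gam γ (b n) - mg γ * (b n)))
      atTop (𝓝 0) := by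
    apply squeeze_zero_norm' (a := fun n => C * Bg * (1 - b n) ^ (1 - θ))
    · apply Eventually.of_forall
      intro n
      have hbIn := hbI n
      have h1b : 0 < 1 - b n := by linarith [hbIn.2]
      have hFb : ‖Gam γ (b n) - mg γ * (b n)‖ ≤ Bg * (1 - b n) := by
        rw [F_eq hγc (Set.Ioo_subset_Icc_self hbIn)]
        have := intervalIntegral.norm_integral_le_of_norm_le_const
          (C := Bg) (f := fun t => mg γ - γ t) (a := b n) (b := 1) ?_
        · calc ‖∫ t in (b n)..1, (mg γ - γ t)‖ ≤ Bg * |1 - b n| := this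
            _ = Bg * (1 - b n) := by rw [abs_of_pos h1b]
        · intro x hx
          rw [Set.uIoc_of_le hbIn.2.le] at hx
          exact hBg x ⟨by linarith [hx.1, hbIn.1], hx.2⟩
      have hexpb := hbd (b n) hbIn
      rw [norm_mul, Real.norm_eq_abs, abs_of_pos (Real.exp_pos _)]
      have hpownn : (0:ℝ) ≤ (1 - b n) ^ (-θ) := (Real.rpow_pos_of_pos h1b _).le
      calc Real.exp (p * Psi γ σ2 (b n)) * ‖Gam γ (b n) - mg γ * (b n)‖
          ≤ (C * (1 - b n) ^ (-θ)) * (Bg * (1 - b n)) :=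
            mul_le_mul hexpb hFb (norm_nonneg _) (by positivity)
        _ = C * Bg * ((1 - b n) ^ (-θ) * (1 - b n) ^ (1:ℝ)) := by
            rw [Real.rpow_one]; ring
        _ = C * Bg * (1 - b n) ^ (1 - θ) := by
            rw [← Real.rpow_add h1b]; ring_nf
    · have h1b0 : Tendsto (fun n => 1 - b n) atTop (𝓝 0) := by
        have : Tendsto (fun n : ℕ => 1 - b n) atTop (𝓝 (1 - 1)) := tendsto_const_nhds.sub hb1
        simpa using this
      have hrpow : Tendsto (fun x : ℝ => x ^ (1 - θ)) (𝓝 0) (𝓝 0) := by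
        have hc := Real.continuousAt_rpow_const 0 (1 - θ) (Or.inr (by linarith))
        have := hc.tendsto
        rwa [Real.zero_rpow (by linarith : (1:ℝ) - θ ≠ 0)] at this
      have := (hrpow.comp h1b0).const_mul (C * Bg)
      simpa using this
  have hlim : Tendsto (fun n => ∫ u in Set.Ioo (a n) (b n), φ u) atTop (𝓝 0) := by
    simp only [hFTC]
    have := hG2.sub hG1
    simpa using this
  exact tendsto_nhds_unique htend hlim

end helpers5


/-- under (UE), (E1) and 0 ≤ p < p_c, the integration-by-parts identity
∫₀¹ exp(p Ψ(u)) (γ(u) - g) du = -(p/2) ∫₀¹ exp(p Ψ(u)) σ²(u) du holds, and the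
reduction formula G^p = (1-p) G_*^p + g follows, where G^p = ⟨b, Π̄^p⟩ with
b = γ + σ²/2 and G_*^p = (1/2) ⟨σ², Π̄^p⟩. -/
theorem stmt14 (γ σ2 : ℝ → ℝ) (hγc : ContinuousOn γ (Set.Icc 0 1))
    (hσc : ContinuousOn σ2 (Set.Icc 0 1)) (hUE : ∀ u ∈ Set.Icc (0:ℝ) 1, 0 < σ2 u)
    (hE1 : ∀ u ∈ Set.Ioo (0:ℝ) 1, 0 < Gam γ u - mg γ * u)
    (hpc : 0 < pcrit γ σ2)
    (p : ℝ) (hp0 : 0 ≤ p) (hp : p < pcrit γ σ2) :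
    (∫ u in Set.Ioo (0:ℝ) 1, Real.exp (p * Psi γ σ2 u) * (γ u - mg γ)) =
        -(p / 2) * ∫ u in Set.Ioo (0:ℝ) 1, Real.exp (p * Psi γ σ2 u) * σ2 u ∧
      bracket γ σ2 (fun u => γ u + σ2 u / 2) p =
        (1 - p) * ((1/2) * bracket γ σ2 σ2 p) + mg γ := by
  have hEint := integrable_E hγc hσc hUE hE1 hpc hp0 hp
  have hAint := integrable_mul hγc hσc hUE hE1 hpc hp0 hp
    (f := fun u => γ u - mg γ) (hγc.sub continuousOn_const)
  have hSint := integrable_mul hγc hσc hUE hE1 hpc hp0 hp (f := σ2) hσc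
  set E : ℝ → ℝ := fun u => Real.exp (p * Psi γ σ2 u) with hEdef
  set A : ℝ := ∫ u in Set.Ioo (0:ℝ) 1, E u * (γ u - mg γ) with hAdef
  set S : ℝ := ∫ u in Set.Ioo (0:ℝ) 1, E u * σ2 u with hSdef
  set Z : ℝ := ∫ u in Set.Ioo (0:ℝ) 1, E u with hZdef
  have hkey := key_zero hγc hσc hUE hE1 hpc hp0 hp
  have hsplit : (fun u => E u * (γ u - mg γ + p * σ2 u / 2))
      = fun u => E u * (γ u - mg γ) + (p/2) * (E u * σ2 u) := by
    funext u; ring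
  have hAint' : IntegrableOn (fun u => E u * (γ u - mg γ)) (Set.Ioo (0:ℝ) 1) := by
    simpa using hAint
  have hAS : A + (p/2) * S = 0 := by
    have h2 : ∫ u in Set.Ioo (0:ℝ) 1, (E u * (γ u - mg γ) + (p/2) * (E u * σ2 u))
        = A + (p/2) * S := by
      rw [integral_add hAint' (hSint.const_mul (p/2)), integral_const_mul]
    have h3 : ∫ u in Set.Ioo (0:ℝ) 1, (E u * (γ u - mg γ) + (p/2) * (E u * σ2 u)) = 0 := by
      refine Eq.trans ?_ hkey
      congr 1
      funext u
      ring
    linarith [h2, h3]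
  have hfirst : A = -(p / 2) * S := by linarith
  refine ⟨hfirst, ?_⟩
  -- positivity of Z
  have hZpos : 0 < Z := by
    rw [hZdef, setIntegral_pos_iff_support_of_nonneg_ae
      (ae_of_all _ (fun u => (Real.exp_pos _).le)) hEint]
    have hss : Function.support E ∩ Set.Ioo (0:ℝ) 1 = Set.Ioo (0:ℝ) 1 :=
      Set.inter_eq_right.mpr (fun u _ => Real.exp_ne_zero _)
    rw [hss, Real.volume_Ioo]
    norm_num
  have hZne : Z ≠ 0 := ne_of_gt hZpos
  -- numerator of bracket for b = γ + σ²/2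
  have hnum : (∫ u in Set.Ioo (0:ℝ) 1, (γ u + σ2 u / 2) * E u)
      = A + (1/2) * S + mg γ * Z := by
    have e1 : ∫ u in Set.Ioo (0:ℝ) 1,
        ((E u * (γ u - mg γ) + (1/2) * (E u * σ2 u)) + mg γ * E u)
        = A + (1/2) * S + mg γ * Z := by
      have hsum' : IntegrableOn (fun u => E u * (γ u - mg γ) + (1/2) * (E u * σ2 u))
          (Set.Ioo (0:ℝ) 1) := hAint'.add (hSint.const_mul (1/2))
      rw [integral_add hsum' (hEint.const_mul (mg γ)),
        integral_add hAint' (hSint.const_mul (1/2)), integral_const_mul, integral_const_mul]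
    refine Eq.trans ?_ e1
    congr 1
    funext u
    ring
  have hnumS : (∫ u in Set.Ioo (0:ℝ) 1, σ2 u * E u) = S := by
    rw [hSdef]
    congr 1
    funext u
    ring
  rw [bracket, bracket]
  rw [show (∫ u in Set.Ioo (0:ℝ) 1, Real.exp (p * Psi γ σ2 u)) = Z from rfl]
  rw [show (∫ u in Set.Ioo (0:ℝ) 1, (fun u => γ u + σ2 u / 2) u * Real.exp (p * Psi γ σ2 u))
    = A + (1/2) * S + mg γ * Z from hnum,
    show (∫ u in Set.Ioo (0:ℝ) 1, σ2 u * Real.exp (p * Psi γ σ2 u)) = S from hnumS, hfirst]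
  field_simp
  ring
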